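/- Let X be a reflexive Banach space with the Opial property and let Σ = {x_n} be a bounded sequence in X. Suppose there exists p ∈ X such that limsup_n ‖x_n − p‖ ≤ liminf_n ‖x_n − w‖ for every weak accumulation point w of Σ. Then p ∈ Λ(Σ) (i.e., lim_n ‖x_n − p‖ exists), p is the unique weak accumulation point of Σ, and x_n ⇀ p weakly as n → ∞. -/
import Mathlib

open Filter Topology

private lemma liminf_comp_eq (u : ℕ → ℝ) (m : ℕ → ℕ) :
    Filter.liminf (fun k => u (m k)) atTop = Filter.liminf u (Filter.map m atTop) := by
  simp only [Filter.liminf, Filter.map_map]; rfl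

private lemma limsup_comp_eq (u : ℕ → ℝ) (m : ℕ → ℕ) :
    Filter.limsup (fun k => u (m k)) atTop = Filter.limsup u (Filter.map m atTop) := by
  simp only [Filter.limsup, Filter.map_map]; rfl

theorem stmt_12 {X : Type*} [NormedAddCommGroup X] [NormedSpace ℝ X] [CompleteSpace X]
    (reflexive : ∀ u : ℕ → X, (∃ C : ℝ, ∀ n, ‖u n‖ ≤ C) →
      ∃ (nk : ℕ → ℕ) (p : X), StrictMono nk ∧
        ∀ φ : X →L[ℝ] ℝ, Tendsto (fun k => φ (u (nk k))) atTop (𝓝 (φ p)))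
    (opial : ∀ (u : ℕ → X) (p : X),
      (∀ φ : X →L[ℝ] ℝ, Tendsto (fun n => φ (u n)) atTop (𝓝 (φ p))) →
      ∀ z, z ≠ p →
        Filter.liminf (fun n => ‖u n - p‖) atTop < Filter.liminf (fun n => ‖u n - z‖) atTop)
    (x : ℕ → X) (hbdd : ∃ C : ℝ, ∀ n, ‖x n‖ ≤ C)
    (p : X)
    (hp : ∀ w : X, (∃ nk : ℕ → ℕ, StrictMono nk ∧
        ∀ φ : X →L[ℝ] ℝ, Tendsto (fun k => φ (x (nk k))) atTop (𝓝 (φ w))) →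
      Filter.limsup (fun n => ‖x n - p‖) atTop ≤ Filter.liminf (fun n => ‖x n - w‖) atTop) :
    (∃ l : ℝ, Tendsto (fun n => ‖x n - p‖) atTop (𝓝 l)) ∧
    (∀ w : X, (∃ nk : ℕ → ℕ, StrictMono nk ∧
        ∀ φ : X →L[ℝ] ℝ, Tendsto (fun k => φ (x (nk k))) atTop (𝓝 (φ w))) ↔ w = p) ∧
    (∀ φ : X →L[ℝ] ℝ, Tendsto (fun n => φ (x n)) atTop (𝓝 (φ p))) := by
  obtain ⟨C, hC⟩ := hbdd
  -- boundedness of the (sub)sequences n ↦ ‖x (m n) - z‖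
  have hubS : ∀ (z : X) (m : ℕ → ℕ),
      IsBoundedUnder (· ≤ ·) atTop (fun k => ‖x (m k) - z‖) := fun z m =>
    isBoundedUnder_of ⟨C + ‖z‖, fun k => by
      have h1 := norm_sub_le (x (m k)) z
      have h2 := hC (m k)
      show ‖x (m k) - z‖ ≤ C + ‖z‖
      linarith⟩
  have hlbS : ∀ (z : X) (m : ℕ → ℕ),
      IsBoundedUnder (· ≥ ·) atTop (fun k => ‖x (m k) - z‖) := fun z m =>
    isBoundedUnder_of ⟨0, fun k => by positivity⟩
  have hub : ∀ z : X, IsBoundedUnder (· ≤ ·) atTop (fun n => ‖x n - z‖) :=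
    fun z => hubS z id
  have hlb : ∀ z : X, IsBoundedUnder (· ≥ ·) atTop (fun n => ‖x n - z‖) :=
    fun z => hlbS z id
  -- every weak accumulation point equals p
  have huniq : ∀ w : X, (∃ nk : ℕ → ℕ, StrictMono nk ∧
      ∀ φ : X →L[ℝ] ℝ, Tendsto (fun k => φ (x (nk k))) atTop (𝓝 (φ w))) → w = p := by
    rintro w ⟨nk, hnk, hw⟩
    by_contra hne
    have hmap : Filter.map nk atTop ≤ atTop := hnk.tendsto_atTop
    have hop := opial (fun k => x (nk k)) w hw p (Ne.symm hne)
    have h1 : Filter.liminf (fun n => ‖x n - w‖) atTop ≤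
        Filter.liminf (fun k => ‖x (nk k) - w‖) atTop := by
      rw [liminf_comp_eq (fun n => ‖x n - w‖) nk]
      have : NeBot (Filter.map nk atTop) := map_neBot
      exact liminf_le_liminf_of_le hmap (hlb w)
        (((hub w).mono hmap).isCoboundedUnder_ge)
    have h2 : Filter.liminf (fun k => ‖x (nk k) - p‖) atTop ≤
        Filter.limsup (fun n => ‖x n - p‖) atTop := by
      calc Filter.liminf (fun k => ‖x (nk k) - p‖) atTop
          ≤ Filter.limsup (fun k => ‖x (nk k) - p‖) atTop :=
            liminf_le_limsup (hubS p nk) (hlbS p nk)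
        _ ≤ Filter.limsup (fun n => ‖x n - p‖) atTop := by
            rw [limsup_comp_eq (fun n => ‖x n - p‖) nk]
            have : NeBot (Filter.map nk atTop) := map_neBot
            exact limsup_le_limsup_of_le hmap
              (((hlb p).mono hmap).isCoboundedUnder_le) (hub p)
    have h3 := hp w ⟨nk, hnk, hw⟩
    exact absurd ((lt_of_le_of_lt (h3.trans h1) hop).trans_le h2) (lt_irrefl _)
  -- p is itself a weak accumulation point
  obtain ⟨nk₀, w₀, hnk₀, hw₀⟩ := reflexive x ⟨C, hC⟩
  have hw₀p : w₀ = p := huniq w₀ ⟨nk₀, hnk₀, hw₀⟩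
  have haccp : ∃ nk : ℕ → ℕ, StrictMono nk ∧
      ∀ φ : X →L[ℝ] ℝ, Tendsto (fun k => φ (x (nk k))) atTop (𝓝 (φ p)) :=
    ⟨nk₀, hnk₀, hw₀p ▸ hw₀⟩
  -- the norm sequence converges
  have hlim : ∃ l : ℝ, Tendsto (fun n => ‖x n - p‖) atTop (𝓝 l) := by
    have hle := hp p haccp
    have hge : Filter.liminf (fun n => ‖x n - p‖) atTop ≤
        Filter.limsup (fun n => ‖x n - p‖) atTop := liminf_le_limsup (hub p) (hlb p)
    exact ⟨Filter.limsup (fun n => ‖x n - p‖) atTop,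
      tendsto_of_liminf_eq_limsup (le_antisymm hge hle) rfl (hub p) (hlb p)⟩
  -- weak convergence of x to p
  have hweak : ∀ φ : X →L[ℝ] ℝ, Tendsto (fun n => φ (x n)) atTop (𝓝 (φ p)) := by
    intro φ
    by_contra hnot
    rw [Metric.tendsto_atTop] at hnot
    push_neg at hnot
    obtain ⟨ε, hε, hfreq⟩ := hnot
    have hfreq' : ∃ᶠ n in atTop, ε ≤ dist (φ (x n)) (φ p) := by
      rw [Filter.frequently_atTop]
      intro N; obtain ⟨n, hn, hd⟩ := hfreq N; exact ⟨n, hn, hd⟩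
    obtain ⟨ms, hms, hP⟩ := extraction_of_frequently_atTop hfreq'
    obtain ⟨nk, w, hnk, hw⟩ := reflexive (fun k => x (ms k)) ⟨C, fun n => hC (ms n)⟩
    have hw' : w = p := huniq w ⟨ms ∘ nk, hms.comp hnk, hw⟩
    have hwp : Tendsto (fun k => φ (x (ms (nk k)))) atTop (𝓝 (φ p)) := hw' ▸ hw φ
    obtain ⟨k, hk⟩ := (hwp.eventually (Metric.ball_mem_nhds (φ p) hε)).exists
    exact absurd (hP (nk k)) (not_le.2 hk)
  exact ⟨hlim, fun w => ⟨huniq w, fun h => h ▸ haccp⟩, hweak⟩
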